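/- Let K be an algebraically closed field and let V ⊂ K^n be the zero set of polynomials C. Suppose μ is an integer such that either the origin 0 is an isolated point of V with multiplicity at most μ with respect to ⟨C⟩, or 0 lies in a positive-dimensional component of V. Let I = ⟨C⟩ + m^{μ+1} where m = ⟨X_1,...,X_n⟩. Then 0 is an isolated point of V if and only if the multiplicity of I at the origin (i.e., dim of the local quotient) is at most μ. -/

import Mathlib

open MvPolynomial

/-- `x` is an isolated point of the zero set `V(I) ⊆ K^n` (for the Zariski
topology): `x ∈ V(I)` and there is a polynomial `h` with `h(x) ≠ 0` such that `x`
is the only point of `V(I)` where `h` does not vanish. -/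
def IsIsolatedZero {σ K : Type*} [CommRing K] (I : Ideal (MvPolynomial σ K))
    (x : σ → K) : Prop :=
  (∀ f ∈ I, MvPolynomial.eval x f = 0) ∧
  ∃ h : MvPolynomial σ K, MvPolynomial.eval x h ≠ 0 ∧
    ∀ y : σ → K, (∀ f ∈ I, MvPolynomial.eval y f = 0) → MvPolynomial.eval y h ≠ 0 → y = x

/-- The multiplicity of the point `pt` with respect to the ideal `I`: the
`K`-dimension of the quotient of the formal power series ring by the extension of
`I` translated so that `pt` becomes the origin. -/
noncomputable def multAt {σ K : Type*} [Field K]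
    (I : Ideal (MvPolynomial σ K)) (pt : σ → K) : ℕ :=
  Module.finrank K (MvPowerSeries σ K ⧸
    Ideal.map ((MvPolynomial.coeToMvPowerSeries.ringHom).comp
      ((MvPolynomial.aeval
        (fun v => MvPolynomial.X v + MvPolynomial.C (pt v)) :
          MvPolynomial σ K →ₐ[K] MvPolynomial σ K)).toRingHom) I)

section Aux

open Pointwise

variable {K : Type*} [Field K] {n : ℕ}

local notation "R" => MvPowerSeries (Fin n) K
local notation "P" => MvPolynomial (Fin n) K

lemma Finsupp.degree_add' {σ : Type*} (a b : σ →₀ ℕ) :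
    (a + b).degree = a.degree + b.degree := by
  simp [Finsupp.degree_eq_weight_one, map_add]

lemma Finsupp.degree_single' {σ : Type*} (i : σ) (e : ℕ) :
    (Finsupp.single i e).degree = e := by
  classical
  simp [Finsupp.degree_eq_weight_one, Finsupp.weight_apply, Finsupp.sum_single_index]

/-- the maximal ideal of the power series ring, generated by the variables -/
noncomputable def mS (K : Type*) [Field K] (n : ℕ) : Ideal (MvPowerSeries (Fin n) K) :=
  Ideal.span (Set.range (MvPowerSeries.X : Fin n → MvPowerSeries (Fin n) K))

/-- the ideal of power series whose coefficients vanish below degree N -/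
def lowIdeal (K : Type*) [Field K] (n N : ℕ) : Ideal (MvPowerSeries (Fin n) K) where
  carrier := {f | ∀ d : Fin n →₀ ℕ, d.degree < N → MvPowerSeries.coeff d f = 0}
  add_mem' := by
    intro a b ha hb
    intro d hd
    simp [map_add, ha d hd, hb d hd]
  zero_mem' := by intro d hd; simp
  smul_mem' := by
    intro r f hf d hd
    rw [smul_eq_mul, MvPowerSeries.coeff_mul]
    apply Finset.sum_eq_zero
    rintro ⟨u, v⟩ huv
    rw [Finset.HasAntidiagonal.mem_antidiagonal] at huv
    have hv : v.degree < N := by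
      have : v.degree ≤ d.degree := by
        rw [← huv, Finsupp.degree_add']; exact Nat.le_add_left _ _
      omega
    rw [hf v hv, mul_zero]

lemma mem_lowIdeal_iff {N : ℕ} {f : R} :
    f ∈ lowIdeal K n N ↔ ∀ d : Fin n →₀ ℕ, d.degree < N → MvPowerSeries.coeff d f = 0 :=
  Iff.rfl

lemma prod_pow_mem {R' : Type*} [CommRing R'] (I : Ideal R') {ι : Type*} (x : ι → R')
    (hx : ∀ i, x i ∈ I) (d : ι →₀ ℕ) :
    (d.prod fun i e => x i ^ e) ∈ I ^ d.degree := by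
  classical
  induction d using Finsupp.induction with
  | zero => simp [Ideal.one_eq_top]
  | single_add a b f ha hb ih =>
    rw [Finsupp.prod_add_index' (fun i => pow_zero (x i)) (fun i b₁ b₂ => pow_add (x i) b₁ b₂),
      Finsupp.degree_add', Finsupp.degree_single', pow_add,
      Finsupp.prod_single_index (a := a) (b := b) (h := fun i e => x i ^ e) (pow_zero (x a))]
    exact Ideal.mul_mem_mul (Ideal.pow_mem_pow (hx a) b) ih

lemma mS_le_lowIdeal_one : (mS K n) ≤ lowIdeal K n 1 := by
  rw [mS, Ideal.span_le]
  rintro _ ⟨i, rfl⟩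
  intro d hd
  have hd0 : d = 0 := by
    rwa [Nat.lt_one_iff, Finsupp.degree_eq_zero_iff] at hd
  subst hd0
  simp [MvPowerSeries.coeff_zero_eq_constantCoeff]

lemma mS_pow_le_lowIdeal (N : ℕ) : (mS K n) ^ N ≤ lowIdeal K n N := by
  induction N with
  | zero => intro f _; intro d hd; exact absurd hd (Nat.not_lt_zero _)
  | succ N ih =>
    rw [pow_succ]
    refine Ideal.mul_le.2 fun f hf g hg => ?_
    have hf' := ih hf
    have hg' := mS_le_lowIdeal_one hg
    intro d hd
    rw [MvPowerSeries.coeff_mul]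
    apply Finset.sum_eq_zero
    rintro ⟨u, v⟩ huv
    rw [Finset.HasAntidiagonal.mem_antidiagonal] at huv
    by_cases hu : u.degree < N
    · rw [hf' u hu, zero_mul]
    · have hv : v.degree < 1 := by
        have := Finsupp.degree_add' u v
        rw [huv] at this
        omega
      rw [hg' v hv, mul_zero]

lemma lowIdeal_le_mS_pow (N : ℕ) : lowIdeal K n N ≤ (mS K n) ^ N := by
  classical
  induction N with
  | zero => intro f _; simp [Ideal.one_eq_top]
  | succ N ih =>
    intro f hf
    -- decompose `f = ∑ i, X i * g i` where `g i` collects the monomials whose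
    -- least variable is `i`
    set g : Fin n → R := fun i =>
      (fun e : Fin n →₀ ℕ =>
        if ∀ j, j < i → e j = 0 then f (e + Finsupp.single i 1) else 0) with hg
    have hdecomp : f = ∑ i : Fin n, MvPowerSeries.X i * g i := by
      apply MvPowerSeries.ext
      intro d
      rw [map_sum]
      by_cases hd0 : d = 0
      · subst hd0
        have h0 : MvPowerSeries.coeff 0 f = 0 := hf 0 (by simp)
        rw [h0]
        symm
        apply Finset.sum_eq_zero
        intro i _
        rw [MvPowerSeries.X_def, MvPowerSeries.coeff_monomial_mul, if_neg]
        intro hle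
        have := Finsupp.single_le_iff.1 hle
        simp at this
      · have hne : d.support.Nonempty := Finsupp.support_nonempty_iff.2 hd0
        set i₀ := d.support.min' hne with hi₀
        have hi₀mem : i₀ ∈ d.support := d.support.min'_mem hne
        have hdi₀ : d i₀ ≠ 0 := Finsupp.mem_support_iff.1 hi₀mem
        rw [Finset.sum_eq_single i₀]
        · have hle : Finsupp.single i₀ 1 ≤ d := by
            rw [Finsupp.single_le_iff]; omega
          rw [MvPowerSeries.X_def, MvPowerSeries.coeff_monomial_mul, if_pos hle, one_mul, hg]
          erw [MvPowerSeries.coeff_apply, MvPowerSeries.coeff_apply]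
          beta_reduce
          rw [tsub_add_cancel_of_le hle, if_pos]
          intro j hj
          rw [Finsupp.tsub_apply]
          have hdj : d j = 0 := by
            by_contra hje
            have hmem : j ∈ d.support := Finsupp.mem_support_iff.2 hje
            have := d.support.min'_le j hmem
            exact absurd this (not_le.2 hj)
          rw [hdj]
          exact Nat.zero_sub _
        · intro i _ hi
          rw [MvPowerSeries.X_def, MvPowerSeries.coeff_monomial_mul]
          by_cases hle : Finsupp.single i 1 ≤ d
          · rw [if_pos hle, one_mul, hg]
            erw [MvPowerSeries.coeff_apply]
            beta_reduce
            rw [tsub_add_cancel_of_le hle, if_neg]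
            intro hall
            have hii : i₀ < i ∨ i < i₀ := lt_or_gt_of_ne (Ne.symm hi)
            rcases hii with hii | hii
            · have hcon := hall i₀ hii
              rw [Finsupp.tsub_apply, Finsupp.single_eq_of_ne hi.symm] at hcon
              omega
            · have h1 : (1 : ℕ) ≤ d i := Finsupp.single_le_iff.1 hle
              have : i ∈ d.support := Finsupp.mem_support_iff.2 (by omega)
              have := d.support.min'_le i this
              exact absurd this (not_le.2 hii)
          · rw [if_neg hle]
        · intro h; exact absurd (Finset.mem_univ i₀) h
    have hgmem : ∀ i, g i ∈ (mS K n) ^ N := by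
      intro i
      apply ih
      intro e he
      simp only [MvPowerSeries.coeff_apply, hg]
      erw [MvPowerSeries.coeff_apply]
      split_ifs with hcond
      · apply hf
        rw [Finsupp.degree_add', Finsupp.degree_single']
        omega
      · rfl

    rw [hdecomp, pow_succ']
    apply Ideal.sum_mem
    intro i _
    exact Ideal.mul_mem_mul (Ideal.subset_span ⟨i, rfl⟩) (hgmem i)

lemma mS_pow_le_span_monomials (N : ℕ) :
    (mS K n) ^ N ≤ Ideal.span {g : R | ∃ d : Fin n →₀ ℕ, d.degree = N ∧
      g = MvPowerSeries.monomial d 1} := by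
  induction N with
  | zero =>
    have h1 : (1 : R) ∈ {g : R | ∃ d : Fin n →₀ ℕ, d.degree = 0 ∧
        g = MvPowerSeries.monomial d 1} :=
      ⟨0, map_zero _, (MvPowerSeries.monomial_zero_one ..).symm⟩
    rw [pow_zero, Ideal.one_eq_top]
    exact ((Ideal.eq_top_iff_one _).2 (Ideal.subset_span h1)).ge
  | succ N ih =>
    rw [pow_succ]
    calc (mS K n) ^ N * mS K n
        ≤ Ideal.span {g : R | ∃ d : Fin n →₀ ℕ, d.degree = N ∧
            g = MvPowerSeries.monomial d 1} * Ideal.span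
            (Set.range (MvPowerSeries.X : Fin n → R)) := Ideal.mul_mono ih le_rfl
      _ = Ideal.span ({g : R | ∃ d : Fin n →₀ ℕ, d.degree = N ∧
            g = MvPowerSeries.monomial d 1} * Set.range (MvPowerSeries.X : Fin n → R)) :=
          Ideal.span_mul_span' _ _
      _ ≤ _ := by
          apply Ideal.span_mono
          rintro _ ⟨_, ⟨d, hd, rfl⟩, _, ⟨i, rfl⟩, rfl⟩
          refine ⟨d + Finsupp.single i 1, ?_, ?_⟩
          · rw [Finsupp.degree_add', Finsupp.degree_single', hd]
          · simp only [MvPowerSeries.X_def, MvPowerSeries.monomial_mul_monomial, mul_one]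

/-- truncation below total degree N -/
lemma exists_poly_sub_mem (hn : n ≠ 0) (f : R) (N : ℕ) :
    ∃ p : P, (∀ d ∈ p.support,
        d < Finsupp.equivFunOnFinite.symm (fun _ : Fin n => N)) ∧
      f - ↑p ∈ (mS K n) ^ N := by
  classical
  set b : Fin n →₀ ℕ := Finsupp.equivFunOnFinite.symm (fun _ : Fin n => N) with hb
  have hbi : ∀ i, b i = N := fun i => rfl
  refine ⟨MvPowerSeries.trunc K b f, ?_, ?_⟩
  · intro d hd
    rw [MvPolynomial.mem_support_iff] at hd
    by_contra hlt
    rw [MvPowerSeries.coeff_trunc, if_neg hlt] at hd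
    exact hd rfl
  · apply lowIdeal_le_mS_pow
    intro d hd
    rw [map_sub, MvPolynomial.coeff_coe, MvPowerSeries.coeff_trunc, if_pos, sub_self]
    have hle : d ≤ b := Finsupp.le_def.2 fun i => by
      have := Finsupp.le_degree i d
      rw [hbi i]
      omega
    have hne : d ≠ b := by
      intro heq
      have hi0 : (0 : ℕ) < n := Nat.pos_of_ne_zero hn
      have h1 : d ⟨0, hi0⟩ = N := by rw [heq]; exact hbi _
      have h2 := Finsupp.le_degree ⟨0, hi0⟩ d
      omega
    exact lt_of_le_of_ne hle hne

lemma finite_quotient_of_mS_pow_le (hn : n ≠ 0) (J : Ideal R) (N : ℕ)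
    (hJ : (mS K n) ^ N ≤ J) : Module.Finite K (R ⧸ J) := by
  classical
  set b : Fin n →₀ ℕ := Finsupp.equivFunOnFinite.symm (fun _ : Fin n => N) with hb
  set S : Finset (R ⧸ J) :=
    (Finset.Iio b).image (fun d => Ideal.Quotient.mk J (MvPowerSeries.monomial d 1)) with hS
  refine ⟨⟨S, ?_⟩⟩
  rw [eq_top_iff]
  rintro x -
  obtain ⟨f, rfl⟩ := Ideal.Quotient.mk_surjective x
  obtain ⟨p, hsupp, hmem⟩ := exists_poly_sub_mem hn f N
  have hfp : Ideal.Quotient.mk J f = Ideal.Quotient.mk J (↑p : R) :=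
    Ideal.Quotient.eq.2 (hJ hmem)
  rw [hfp]
  have hrepr : (↑p : R) = ∑ d ∈ p.support, MvPowerSeries.monomial d (p.coeff d) := by
    conv_lhs => rw [← MvPolynomial.support_sum_monomial_coeff p,
      ← MvPolynomial.coeToMvPowerSeries.ringHom_apply]
    rw [map_sum]
    exact Finset.sum_congr rfl fun d _ => by
      rw [MvPolynomial.coeToMvPowerSeries.ringHom_apply, MvPolynomial.coe_monomial]
  rw [hrepr, ← Ideal.Quotient.mkₐ_eq_mk K J, map_sum]
  apply Submodule.sum_mem
  intro d hd
  have hsm : MvPowerSeries.monomial d (p.coeff d)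
      = (p.coeff d) • MvPowerSeries.monomial d (1 : K) := by
    rw [← map_smul, smul_eq_mul, mul_one]
  rw [hsm, map_smul]
  refine Submodule.smul_mem _ _ (Submodule.subset_span ?_)
  rw [hS]
  refine Finset.mem_coe.2 (Finset.mem_image.2 ⟨d, Finset.mem_Iio.2 (hsupp d hd), ?_⟩)
  rw [Ideal.Quotient.mkₐ_eq_mk]

/-- polynomial analogue: vanishing low coefficients puts you in the power of the
maximal ideal -/
lemma poly_mem_pow_of_lowCoeff_zero {N : ℕ} {q : P}
    (h : ∀ d : Fin n →₀ ℕ, d.degree < N → q.coeff d = 0) :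
    q ∈ (Ideal.span (Set.range (X : Fin n → P))) ^ N := by
  classical
  rw [← MvPolynomial.support_sum_monomial_coeff q]
  apply Ideal.sum_mem
  intro d hd
  have hdeg : N ≤ d.degree := by
    by_contra hlt
    exact MvPolynomial.mem_support_iff.1 hd (h d (by omega))
  rw [MvPolynomial.monomial_eq]
  apply Ideal.mul_mem_left
  refine SetLike.le_def.1 (Ideal.pow_le_pow_right hdeg) ?_
  exact prod_pow_mem (Ideal.span (Set.range (X : Fin n → P))) (fun i => X i)
    (fun i => Ideal.subset_span ⟨i, rfl⟩) d

lemma poly_mem_pow_of_coe_mem {N : ℕ} {q : P}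
    (h : (↑q : R) ∈ (mS K n) ^ N) :
    q ∈ (Ideal.span (Set.range (X : Fin n → P))) ^ N := by
  apply poly_mem_pow_of_lowCoeff_zero
  intro d hd
  have := mS_pow_le_lowIdeal N h d hd
  rwa [MvPolynomial.coeff_coe] at this

lemma map_coe_span_X :
    Ideal.map (MvPolynomial.coeToMvPowerSeries.ringHom :
        P →+* R) (Ideal.span (Set.range (X : Fin n → P))) = mS K n := by
  rw [Ideal.map_span, ← Set.range_comp, mS]
  congr 1
  apply congrArg
  funext s
  simp [MvPolynomial.coe_X]

end Aux


section Main

variable {K : Type*} [Field K] {n : ℕ}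

local notation "R" => MvPowerSeries (Fin n) K
local notation "P" => MvPolynomial (Fin n) K

lemma eval_eq_zero_of_mem_span {S : Set P} {y : Fin n → K}
    (hS : ∀ g ∈ S, eval y g = 0) {f : P} (hf : f ∈ Ideal.span S) :
    eval y f = 0 := by
  have : Ideal.span S ≤ RingHom.ker (eval y : P →+* K) :=
    Ideal.span_le.2 fun g hg => RingHom.mem_ker.2 (hS g hg)
  exact RingHom.mem_ker.1 (this hf)

lemma multAt_zero (I : Ideal P) :
    multAt I (0 : Fin n → K) = Module.finrank K
      (R ⧸ Ideal.map (MvPolynomial.coeToMvPowerSeries.ringHom : P →+* R) I) := by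
  have h1 : (fun v : Fin n => (X v + C ((0 : Fin n → K) v) : P)) = X := by
    funext v; simp
  unfold multAt
  rw [h1, MvPolynomial.aeval_X_left]
  rfl

lemma constantCoeff_coe_eq (p : P) :
    MvPowerSeries.constantCoeff (↑p : R) = eval (0 : Fin n → K) p := by
  rw [← MvPowerSeries.coeff_zero_eq_constantCoeff_apply, MvPolynomial.coeff_coe,
    MvPolynomial.eval_zero]
  rfl

end Main

set_option maxHeartbeats 2000000 in
set_option synthInstance.maxHeartbeats 400000 in
/-- Local dimension test: let `C` vanish at the origin and suppose `μ` bounds the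
multiplicity of the origin whenever it is an isolated point of `V(C)` (assumption
`A`: either `0` is isolated of multiplicity `≤ μ`, or `0` lies in a
positive-dimensional component, i.e. is not isolated).  Then `0` is isolated in
`V(C)` if and only if the multiplicity at the origin of
`I = ⟨C⟩ + 𝔪^{μ+1}` is at most `μ`. -/
theorem stmt5 (K : Type*) [Field K] [IsAlgClosed K] (n m μ : ℕ)
    (c : Fin m → MvPolynomial (Fin n) K)
    (hc : ∀ i, MvPolynomial.eval (0 : Fin n → K) (c i) = 0)
    (hA : IsIsolatedZero (Ideal.span (Set.range c)) (0 : Fin n → K) →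
      multAt (Ideal.span (Set.range c)) (0 : Fin n → K) ≤ μ) :
    IsIsolatedZero (Ideal.span (Set.range c)) (0 : Fin n → K) ↔
      multAt
        (Ideal.span (Set.range c) ⊔
          (Ideal.span (Set.range (MvPolynomial.X : Fin n → MvPolynomial (Fin n) K))) ^ (μ + 1))
        (0 : Fin n → K) ≤ μ := by
  classical
  set A : Ideal (MvPolynomial (Fin n) K) := Ideal.span (Set.range c) with hAdef
  set mP : Ideal (MvPolynomial (Fin n) K) :=
    Ideal.span (Set.range (MvPolynomial.X : Fin n → MvPolynomial (Fin n) K)) with hmPdef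
  have hmem0 : ∀ f ∈ A, eval (0 : Fin n → K) f = 0 := fun f hf =>
    eval_eq_zero_of_mem_span (by rintro g ⟨i, rfl⟩; exact hc i) hf
  by_cases hn : n = 0
  · subst hn
    have hiso : IsIsolatedZero A (0 : Fin 0 → K) :=
      ⟨hmem0, 1, by simp, fun y _ _ => funext fun i => i.elim0⟩
    have hbot : mP = ⊥ := by
      rw [hmPdef, Set.range_eq_empty, Ideal.span_empty]
    have hsup : A ⊔ mP ^ (μ + 1) = A := by
      refine sup_eq_left.2 (le_trans (Ideal.pow_le_self (Nat.succ_ne_zero μ)) ?_)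
      rw [hbot]; exact bot_le
    rw [hsup]
    exact iff_of_true hiso (hA hiso)
  -- the main case `n ≠ 0`
  set φ : MvPolynomial (Fin n) K →+* MvPowerSeries (Fin n) K :=
    MvPolynomial.coeToMvPowerSeries.ringHom with hφdef
  set J1 : Ideal (MvPowerSeries (Fin n) K) := Ideal.map φ A with hJ1def
  have hmapsup : Ideal.map φ (A ⊔ mP ^ (μ + 1)) = J1 ⊔ (mS K n) ^ (μ + 1) := by
    rw [Ideal.map_sup, Ideal.map_pow, map_coe_span_X]
  set J2 : Ideal (MvPowerSeries (Fin n) K) := J1 ⊔ (mS K n) ^ (μ + 1) with hJ2def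
  have hJ12 : J1 ≤ J2 := le_sup_left
  have hfin2 : Module.Finite K (MvPowerSeries (Fin n) K ⧸ J2) :=
    finite_quotient_of_mS_pow_le hn J2 (μ + 1) le_sup_right
  rw [multAt_zero, hmapsup]
  constructor
  · -- forward direction
    intro hiso
    obtain ⟨hzero, h, hh0, huniq⟩ := hiso
    -- by the Nullstellensatz, `h * X i` is in the radical of `A`
    have hrad : ∀ i, h * X i ∈ A.radical := by
      intro i
      rw [← MvPolynomial.vanishingIdeal_zeroLocus_eq_radical (K := K)]
      rw [MvPolynomial.mem_vanishingIdeal_iff]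
      intro x hx
      by_cases hxh : eval x h = 0
      · rw [map_mul, show aeval x h = 0 from hxh, zero_mul]
      · have hx0 : x = 0 := huniq x (fun f hf => hx f hf) hxh
        subst hx0
        simp
    have hradN : ∀ i, ∃ N, (h * X i) ^ N ∈ A := fun i => hrad i
    choose Nf hNf using hradN
    set N : ℕ := Finset.univ.sup Nf + 1 with hNdef
    have hN0 : N ≠ 0 := Nat.succ_ne_zero _
    have hNmem : ∀ i, (h * X i) ^ N ∈ A := by
      intro i
      have hle : Nf i ≤ N := le_trans (Finset.le_sup (Finset.mem_univ i)) (Nat.le_succ _)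
      rw [← Nat.add_sub_cancel' hle, pow_add]
      exact Ideal.mul_mem_right _ _ (hNf i)
    -- `φ h` is a unit in the power series ring
    have hunit : IsUnit (φ h) := by
      rw [MvPowerSeries.isUnit_iff_constantCoeff]
      have : MvPowerSeries.constantCoeff (φ h) = eval (0 : Fin n → K) h := by
        rw [hφdef, MvPolynomial.coeToMvPowerSeries.ringHom_apply, constantCoeff_coe_eq]
      rw [this]
      exact isUnit_iff_ne_zero.2 hh0
    have hXiN : ∀ i, (MvPowerSeries.X i : MvPowerSeries (Fin n) K) ^ N ∈ J1 := by
      intro i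
      have h1 : φ ((h * X i) ^ N) ∈ J1 := Ideal.mem_map_of_mem φ (hNmem i)
      rw [map_pow, map_mul] at h1
      have hXc : φ (X i) = MvPowerSeries.X i := by
        rw [hφdef, MvPolynomial.coeToMvPowerSeries.ringHom_apply, MvPolynomial.coe_X]
      rw [mul_pow, hXc] at h1
      obtain ⟨u, hu⟩ := hunit.pow N
      have heq : (MvPowerSeries.X i : MvPowerSeries (Fin n) K) ^ N
          = (↑u⁻¹ : MvPowerSeries (Fin n) K) * (φ h ^ N * MvPowerSeries.X i ^ N) := by
        rw [← mul_assoc, ← hu, Units.inv_mul, one_mul]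
      rw [heq]
      exact Ideal.mul_mem_left _ _ h1
    -- hence a large power of the maximal ideal is contained in `J1`
    have hms : (mS K n) ^ (n * N) ≤ J1 := by
      refine le_trans (mS_pow_le_span_monomials (n * N)) (Ideal.span_le.2 ?_)
      rintro _ ⟨d, hd, rfl⟩
      have hex : ∃ i, N ≤ d i := by
        by_contra hno
        push_neg at hno
        have hsum : d.degree = ∑ i : Fin n, d i := by
          rw [Finsupp.degree]
          exact Finset.sum_subset (Finset.subset_univ _)
            (fun i _ hi => Finsupp.notMem_support_iff.1 hi)
        have hle : ∑ i : Fin n, d i ≤ ∑ _i : Fin n, (N - 1) :=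
          Finset.sum_le_sum fun i _ => by have := hno i; omega
        rw [Finset.sum_const, Finset.card_univ, Fintype.card_fin, smul_eq_mul] at hle
        have hn1 : 1 ≤ n := Nat.one_le_iff_ne_zero.2 hn
        have hN1 : 1 ≤ N := Nat.one_le_iff_ne_zero.2 hN0
        rw [hsum] at hd
        have hmul : n * (N - 1) < n * N :=
          mul_lt_mul_of_pos_left (show N - 1 < N by omega) (Nat.pos_of_ne_zero hn)
        omega
      obtain ⟨i, hi⟩ := hex
      have hle : Finsupp.single i N ≤ d := Finsupp.single_le_iff.2 hi
      have : (MvPowerSeries.monomial d 1 : MvPowerSeries (Fin n) K)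
          = MvPowerSeries.monomial (d - Finsupp.single i N) 1 * MvPowerSeries.X i ^ N := by
        rw [MvPowerSeries.X_pow_eq, MvPowerSeries.monomial_mul_monomial, mul_one,
          tsub_add_cancel_of_le hle]
      rw [this]
      exact Ideal.mul_mem_left _ _ (hXiN i)
    have hfin1 : Module.Finite K (MvPowerSeries (Fin n) K ⧸ J1) :=
      finite_quotient_of_mS_pow_le hn J1 (n * N) hms
    -- the quotient by `J2` is a quotient of the quotient by `J1`
    have hcomap : J1 ≤ Ideal.comap (AlgHom.id K (MvPowerSeries (Fin n) K)) J2 := hJ12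
    set π := Ideal.quotientMapₐ J2 (AlgHom.id K (MvPowerSeries (Fin n) K)) hcomap with hπ
    have hsurj : Function.Surjective π.toLinearMap := by
      intro z
      obtain ⟨w, rfl⟩ := Ideal.Quotient.mk_surjective z
      exact ⟨Ideal.Quotient.mk J1 w, rfl⟩
    have hrange : LinearMap.range π.toLinearMap = ⊤ := LinearMap.range_eq_top.2 hsurj
    have hfr : Module.finrank K (MvPowerSeries (Fin n) K ⧸ J2)
        ≤ Module.finrank K (MvPowerSeries (Fin n) K ⧸ J1) := by
      have h1 := LinearMap.finrank_range_le π.toLinearMap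
      rwa [hrange, finrank_top] at h1
    have h2 := hA ⟨hmem0, h, hh0, huniq⟩
    rw [multAt_zero] at h2
    exact le_trans hfr h2
  · -- reverse direction
    intro hdim
    -- the filtration `J1 ⊔ mS^k` must stabilise at some `k ≤ μ`
    set q : MvPowerSeries (Fin n) K →ₗ[K] MvPowerSeries (Fin n) K ⧸ J2 :=
      (Ideal.Quotient.mkₐ K J2).toLinearMap with hq
    have hker : LinearMap.ker q = J2.restrictScalars K := by
      ext x
      simp only [LinearMap.mem_ker, hq, AlgHom.toLinearMap_apply, Ideal.Quotient.mkₐ_eq_mk,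
        Submodule.restrictScalars_mem]
      exact Ideal.Quotient.eq_zero_iff_mem
    set F : ℕ → Submodule K (MvPowerSeries (Fin n) K ⧸ J2) :=
      fun k => Submodule.map q ((J1 ⊔ (mS K n) ^ k).restrictScalars K) with hF
    have hkey : ∀ k : ℕ, k ≤ μ → F (k + 1) = F k →
        J1 ⊔ (mS K n) ^ (k + 1) = J1 ⊔ (mS K n) ^ k := by
      intro k hk heq
      have hJ2le : ∀ j, j ≤ μ + 1 → J2 ≤ J1 ⊔ (mS K n) ^ j := fun j hj =>
        sup_le_sup_left (Ideal.pow_le_pow_right hj) _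
      have h1 := congrArg (Submodule.comap q) heq
      rw [hF] at h1
      simp only [Submodule.comap_map_eq, hker] at h1
      have e1 : ∀ j, j ≤ μ + 1 →
          (J1 ⊔ (mS K n) ^ j).restrictScalars K ⊔ J2.restrictScalars K
            = (J1 ⊔ (mS K n) ^ j).restrictScalars K := by
        intro j hj
        refine sup_eq_left.2 fun x hx => ?_
        rw [Submodule.restrictScalars_mem] at hx ⊢
        exact hJ2le j hj hx
      rw [e1 (k + 1) (by omega), e1 k (by omega)] at h1
      exact Submodule.restrictScalars_injective K _ _ h1
    have hex : ∃ k, k ≤ μ ∧ J1 ⊔ (mS K n) ^ (k + 1) = J1 ⊔ (mS K n) ^ k := by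
      by_contra hno
      push_neg at hno
      have hstrict : ∀ k, k ≤ μ → F (k + 1) < F k := by
        intro k hk
        refine lt_of_le_of_ne ?_ fun heq => hno k hk (hkey k hk heq)
        apply Submodule.map_mono
        intro x hx
        rw [Submodule.restrictScalars_mem] at hx ⊢
        exact (sup_le_sup_left (Ideal.pow_le_pow_right (Nat.le_succ k)) J1 :
          J1 ⊔ mS K n ^ (k + 1) ≤ J1 ⊔ mS K n ^ k) hx
      haveI : FiniteDimensional K (MvPowerSeries (Fin n) K ⧸ J2) := hfin2
      have hdesc : ∀ j, j ≤ μ + 1 →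
          Module.finrank K (F j) + j ≤ Module.finrank K (F 0) := by
        intro j
        induction j with
        | zero => intro _; omega
        | succ j ih =>
          intro hj
          have h1 : Module.finrank K (F (j + 1)) < Module.finrank K (F j) :=
            Submodule.finrank_lt_finrank_of_lt (hstrict j (by omega))
          have h2 := ih (by omega)
          omega
      have hlast := hdesc (μ + 1) le_rfl
      have hle0 : Module.finrank K (F 0) ≤
          Module.finrank K (MvPowerSeries (Fin n) K ⧸ J2) := Submodule.finrank_le _
      omega
    obtain ⟨k, hkμ, hkeq⟩ := hex
    -- the stabilisation index cannot be `0`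
    have hk0 : k ≠ 0 := by
      intro h0
      subst h0
      have htop : (1 : MvPowerSeries (Fin n) K) ∈ J1 ⊔ (mS K n) ^ (0 + 1) := by
        rw [hkeq, pow_zero, Ideal.one_eq_top]
        exact Submodule.mem_sup_right trivial
      have hle : J1 ⊔ (mS K n) ^ (0 + 1) ≤
          RingHom.ker (MvPowerSeries.constantCoeff) := by
        refine sup_le ?_ ?_
        · rw [hJ1def, Ideal.map_le_iff_le_comap, hAdef, Ideal.span_le]
          rintro _ ⟨j, rfl⟩
          show φ (c j) ∈ RingHom.ker _
          rw [RingHom.mem_ker, hφdef, MvPolynomial.coeToMvPowerSeries.ringHom_apply,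
            constantCoeff_coe_eq]
          exact hc j
        · rw [zero_add, pow_one, mS, Ideal.span_le]
          rintro _ ⟨i, rfl⟩
          rw [SetLike.mem_coe, RingHom.mem_ker, MvPowerSeries.constantCoeff_X]
      have hcon := hle htop
      rw [RingHom.mem_ker, map_one] at hcon
      exact one_ne_zero hcon
    -- Nakayama in the power series ring : `mS^k ≤ J1`
    have hfgS : ((mS K n) ^ k : Ideal (MvPowerSeries (Fin n) K)).FG := by
      have hSk : (mS K n) ^ k = Ideal.map φ (mP ^ k) := by
        rw [Ideal.map_pow, hφdef, map_coe_span_X]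
      rw [hSk]
      exact Ideal.FG.map (IsNoetherian.noetherian _) φ
    set NN := Submodule.map
      (J1 : Submodule (MvPowerSeries (Fin n) K) (MvPowerSeries (Fin n) K)).mkQ
      ((mS K n) ^ k : Ideal (MvPowerSeries (Fin n) K)) with hNN
    have hNNfg : NN.FG := Submodule.FG.map _ hfgS
    have hNNle : NN ≤ (mS K n) • NN := by
      rintro x ⟨z, hz, rfl⟩
      have hz' : z ∈ J1 ⊔ (mS K n) ^ (k + 1) := by
        rw [hkeq]
        exact Submodule.mem_sup_right hz
      obtain ⟨a, ha, b, hb, rfl⟩ := Submodule.mem_sup.1 hz'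
      rw [map_add]
      have ha0 : (J1 : Submodule (MvPowerSeries (Fin n) K)
          (MvPowerSeries (Fin n) K)).mkQ a = 0 := by
        rw [Submodule.mkQ_apply, Submodule.Quotient.mk_eq_zero]
        exact ha
      rw [ha0, zero_add]
      have hb' : b ∈ (mS K n) • ((mS K n) ^ k : Ideal (MvPowerSeries (Fin n) K)) := by
        rw [Ideal.smul_eq_mul, ← pow_succ']
        exact hb
      have hmem := Submodule.mem_map_of_mem
        (f := (J1 : Submodule (MvPowerSeries (Fin n) K) (MvPowerSeries (Fin n) K)).mkQ) hb'
      rw [Submodule.map_smul''] at hmem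
      exact hmem
    have hjac : (mS K n) ≤ Ideal.jacobson ⊥ := by
      rw [IsLocalRing.jacobson_eq_maximalIdeal (⊥ : Ideal (MvPowerSeries (Fin n) K)) bot_ne_top,
        mS, Ideal.span_le]
      rintro _ ⟨i, rfl⟩
      rw [SetLike.mem_coe, IsLocalRing.mem_maximalIdeal, mem_nonunits_iff,
        MvPowerSeries.isUnit_iff_constantCoeff, MvPowerSeries.constantCoeff_X]
      exact not_isUnit_zero
    have hNNbot := Submodule.eq_bot_of_le_smul_of_le_jacobson_bot (mS K n) NN hNNfg hNNle hjac
    have hSkJ1 : (mS K n) ^ k ≤ J1 := by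
      intro z hz
      have hmem : (J1 : Submodule (MvPowerSeries (Fin n) K)
          (MvPowerSeries (Fin n) K)).mkQ z ∈ NN := Submodule.mem_map_of_mem hz
      rw [hNNbot, Submodule.mem_bot, Submodule.mkQ_apply, Submodule.Quotient.mk_eq_zero] at hmem
      exact hmem
    -- pull back to polynomials : `mP^k ≤ A ⊔ mP^(k+1)`
    have hpoly : mP ^ k ≤ A ⊔ mP ^ (k + 1) := by
      intro w hw
      have hφw : φ w ∈ J1 := by
        apply hSkJ1
        have : (mS K n) ^ k = Ideal.map φ (mP ^ k) := by
          rw [Ideal.map_pow, hφdef, map_coe_span_X]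
        rw [this]
        exact Ideal.mem_map_of_mem φ hw
      have hspan : J1 = Ideal.span (Set.range fun j => φ (c j)) := by
        rw [hJ1def, hAdef, Ideal.map_span, ← Set.range_comp]
        rfl
      rw [hspan, Ideal.mem_span_range_iff_exists_fun] at hφw
      obtain ⟨g, hg⟩ := hφw
      have hex := fun j => exists_poly_sub_mem hn (g j) (k + 1)
      choose p hpsupp hpmem using hex
      have hdiff : φ (w - ∑ j, p j * c j) ∈ (mS K n) ^ (k + 1) := by
        rw [map_sub, map_sum, ← hg, ← Finset.sum_sub_distrib]
        apply Ideal.sum_mem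
        intro j _
        rw [map_mul]
        have heq : g j * φ (c j) - φ (p j) * φ (c j) = (g j - φ (p j)) * φ (c j) := by ring
        rw [heq]
        refine Ideal.mul_mem_right _ _ ?_
        have := hpmem j
        rwa [hφdef, MvPolynomial.coeToMvPowerSeries.ringHom_apply]
      have hw2 : w - ∑ j, p j * c j ∈ mP ^ (k + 1) := by
        rw [hmPdef]
        apply poly_mem_pow_of_coe_mem
        rwa [hφdef, MvPolynomial.coeToMvPowerSeries.ringHom_apply] at hdiff
      have hsum : ∑ j, p j * c j ∈ A :=
        Ideal.sum_mem _ fun j _ => Ideal.mul_mem_left _ _ (Ideal.subset_span ⟨j, rfl⟩)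
      have hwrepr : w = (∑ j, p j * c j) + (w - ∑ j, p j * c j) := by ring
      rw [hwrepr]
      exact Submodule.add_mem_sup hsum hw2
    -- Nakayama in the polynomial ring
    set NP := Submodule.map
      (A : Submodule (MvPolynomial (Fin n) K) (MvPolynomial (Fin n) K)).mkQ
      (mP ^ k : Ideal (MvPolynomial (Fin n) K)) with hNP
    have hNPfg : NP.FG := Submodule.FG.map _ (IsNoetherian.noetherian _)
    have hNPle : NP ≤ mP • NP := by
      rintro x ⟨z, hz, rfl⟩
      obtain ⟨a, ha, b, hb, rfl⟩ := Submodule.mem_sup.1 (hpoly hz)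
      rw [map_add]
      have ha0 : (A : Submodule (MvPolynomial (Fin n) K)
          (MvPolynomial (Fin n) K)).mkQ a = 0 := by
        rw [Submodule.mkQ_apply, Submodule.Quotient.mk_eq_zero]
        exact ha
      rw [ha0, zero_add]
      have hb' : b ∈ mP • (mP ^ k : Ideal (MvPolynomial (Fin n) K)) := by
        rw [Ideal.smul_eq_mul, ← pow_succ']
        exact hb
      have hmem := Submodule.mem_map_of_mem
        (f := (A : Submodule (MvPolynomial (Fin n) K) (MvPolynomial (Fin n) K)).mkQ) hb'
      rw [Submodule.map_smul''] at hmem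
      exact hmem
    obtain ⟨r, hr1, hr0⟩ :=
      Submodule.exists_sub_one_mem_and_smul_eq_zero_of_fg_of_le_smul mP NP hNPfg hNPle
    refine And.intro hmem0 (Exists.intro r (And.intro ?_ ?_))
    · have h0 : eval (0 : Fin n → K) (r - 1) = 0 := by
        refine eval_eq_zero_of_mem_span (S := Set.range (X : Fin n →
          MvPolynomial (Fin n) K)) ?_ (by rwa [hmPdef] at hr1)
        rintro g ⟨i, rfl⟩
        simp
      rw [map_sub, map_one, sub_eq_zero] at h0
      rw [h0]
      exact one_ne_zero
    · intro y hy hyr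
      funext i
      have hXmem : (X i : MvPolynomial (Fin n) K) ∈ mP := by
        rw [hmPdef]
        exact Ideal.subset_span ⟨i, rfl⟩
      have hXk : (X i : MvPolynomial (Fin n) K) ^ k ∈ mP ^ k :=
        Ideal.pow_mem_pow hXmem k
      have hz : (A : Submodule (MvPolynomial (Fin n) K)
          (MvPolynomial (Fin n) K)).mkQ ((X i) ^ k) ∈ NP := Submodule.mem_map_of_mem hXk
      have hr := hr0 _ hz
      rw [← map_smul, Submodule.mkQ_apply, Submodule.Quotient.mk_eq_zero, smul_eq_mul] at hr
      have hev := hy _ hr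
      rw [map_mul, map_pow, eval_X] at hev
      have hyi : y i ^ k = 0 := by
        rcases mul_eq_zero.1 hev with hcase | hcase
        · exact absurd hcase hyr
        · exact hcase
      have := (pow_eq_zero_iff hk0).1 hyi
      simpa using this
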